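/- Define f : [0,1] → 2^[0,1] by f(x) = {x, 1−x}. Then f is upper semicontinuous and has the weak intermediate value property, but does not have the intermediate value property. -/

import Mathlib

open Set Filter Topology

/-- The graph of a set-valued function on `[0,1]`. -/
def SetGraph (f : ℝ → Set ℝ) : Set (ℝ × ℝ) :=
  {p | p.1 ∈ Icc (0:ℝ) 1 ∧ p.2 ∈ f p.1}

/-- Upper semicontinuous set-valued function `[0,1] → 2^[0,1]`:
nonempty compact values inside `[0,1]` and closed graph. -/
def USC (f : ℝ → Set ℝ) : Prop :=
  (∀ x ∈ Icc (0:ℝ) 1, (f x).Nonempty ∧ f x ⊆ Icc (0:ℝ) 1 ∧ IsCompact (f x)) ∧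
    IsClosed (SetGraph f)

/-- The intermediate value property. -/
def IVP (f : ℝ → Set ℝ) : Prop :=
  ∀ x₁ ∈ Icc (0:ℝ) 1, ∀ x₂ ∈ Icc (0:ℝ) 1, x₁ ≠ x₂ →
    ∀ y₁ ∈ f x₁, ∀ y₂ ∈ f x₂, y₁ ≠ y₂ →
      ∀ y ∈ Ioo (min y₁ y₂) (max y₁ y₂),
        ∃ x ∈ Ioo (min x₁ x₂) (max x₁ x₂), y ∈ f x

/-- The weak intermediate value property. -/
def WIVP (f : ℝ → Set ℝ) : Prop :=
  ∀ x₁ ∈ Icc (0:ℝ) 1, ∀ x₂ ∈ Icc (0:ℝ) 1, x₁ ≠ x₂ →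
    ∀ y₁ ∈ f x₁, ∃ y₂ ∈ f x₂,
      ∀ y ∈ Icc (min y₁ y₂) (max y₁ y₂),
        ∃ x ∈ Icc (min x₁ x₂) (max x₁ x₂), y ∈ f x

/-- Weak continuity (from the left and the right) at each interior point. -/
def WeakCont (f : ℝ → Set ℝ) : Prop :=
  ∀ x ∈ Ioo (0:ℝ) 1, ∀ y ∈ f x,
    (∃ u : ℕ → ℝ × ℝ, (∀ k, u k ∈ SetGraph f ∧ (u k).1 < x) ∧
      Tendsto u atTop (𝓝 (x, y))) ∧
    (∃ u : ℕ → ℝ × ℝ, (∀ k, u k ∈ SetGraph f ∧ x < (u k).1) ∧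
      Tendsto u atTop (𝓝 (x, y)))

/-- `f` is almost nonfissile: the nonfissile points of the graph are dense in the graph. -/
def AlmostNonfissile (f : ℝ → Set ℝ) : Prop :=
  SetGraph f ⊆ closure {p | p ∈ SetGraph f ∧ f p.1 = {p.2}}

/-- `f` is light: each fiber `{x : y ∈ f x}` has empty interior in `[0,1]`. -/
def Light (f : ℝ → Set ℝ) : Prop :=
  ∀ y : ℝ, ∀ U : Set ℝ, IsOpen U → (U ∩ Icc (0:ℝ) 1).Nonempty →
    ∃ x ∈ U ∩ Icc (0:ℝ) 1, y ∉ f x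

/-- `f` is surjective onto `[0,1]`. -/
def Surj (f : ℝ → Set ℝ) : Prop :=
  ∀ y ∈ Icc (0:ℝ) 1, ∃ x ∈ Icc (0:ℝ) 1, y ∈ f x

/-- The `n`-fold set-valued composition of `f`. -/
def fIter (f : ℝ → Set ℝ) : ℕ → ℝ → Set ℝ
  | 0, x => {x}
  | n + 1, x => ⋃ z ∈ fIter f n x, f z

/-- The image `f^n[A] = ⋃_{a ∈ A} f^n(a)`. -/
def imIter (f : ℝ → Set ℝ) (n : ℕ) (A : Set ℝ) : Set ℝ :=
  ⋃ a ∈ A, fIter f n a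

/-- The inverse limit of the single bonding function `f` on `[0,1]`. -/
def InvLim (f : ℝ → Set ℝ) : Set (ℕ → ℝ) :=
  {z | (∀ i, z i ∈ Icc (0:ℝ) 1) ∧ ∀ i, z i ∈ f (z (i + 1))}

/-- `X` is irreducible between `x` and `y`: the only subcontinuum of `X`
containing both is `X` itself. -/
def IrreducibleBetween (X : Set (ℕ → ℝ)) (x y : ℕ → ℝ) : Prop :=
  x ∈ X ∧ y ∈ X ∧
    ∀ K ⊆ X, IsCompact K → IsConnected K → x ∈ K → y ∈ K → K = X

/-- `f(x) = {x, 1-x}` is usc, has the weak IVP, but not the IVP. -/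
theorem stmt10 :
    USC (fun x => ({x, 1 - x} : Set ℝ)) ∧
      WIVP (fun x => ({x, 1 - x} : Set ℝ)) ∧
      ¬ IVP (fun x => ({x, 1 - x} : Set ℝ)) := by

  refine ⟨⟨fun x hx => ⟨⟨x, by simp⟩, ?_, (((Set.finite_singleton (1 - x)).insert x).isCompact)⟩, ?_⟩, ?_, ?_⟩
  · intro y hy
    rcases hy with h | h
    · simpa [h] using hx
    · simp only [Set.mem_singleton_iff] at h
      subst h
      exact ⟨by linarith [hx.2], by linarith [hx.1]⟩
  · have : SetGraph (fun x => ({x, 1 - x} : Set ℝ)) =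
        (Icc (0:ℝ) 1 ×ˢ univ) ∩ ({p : ℝ × ℝ | p.2 = p.1} ∪ {p : ℝ × ℝ | p.2 = 1 - p.1}) := by
      ext ⟨a, b⟩
      simp [SetGraph, and_assoc]
    rw [this]
    exact (isClosed_Icc.prod isClosed_univ).inter
      ((isClosed_eq continuous_snd continuous_fst).union
        (isClosed_eq continuous_snd (by continuity)))
  · intro x₁ hx₁ x₂ hx₂ hne y₁ hy₁
    rcases hy₁ with h | h
    · subst h
      refine ⟨x₂, Or.inl rfl, fun y hy => ⟨y, hy, Or.inl rfl⟩⟩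
    · simp only [Set.mem_singleton_iff] at h
      subst h
      refine ⟨1 - x₂, Or.inr rfl, fun y hy => ⟨1 - y, ?_, Or.inr (by simp)⟩⟩
      rcases le_total x₁ x₂ with hle | hle
      · rw [min_eq_left hle, max_eq_right hle]
        rw [min_eq_right (by linarith), max_eq_left (by linarith)] at hy
        exact ⟨by linarith [hy.2], by linarith [hy.1]⟩
      · rw [min_eq_right hle, max_eq_left hle]
        rw [min_eq_left (by linarith), max_eq_right (by linarith)] at hy
        exact ⟨by linarith [hy.2], by linarith [hy.1]⟩
  · intro h
    obtain ⟨x, hx, hmem⟩ := h 0 (by norm_num) (1/4) (by norm_num) (by norm_num)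
      1 (by norm_num) (1/4) (by norm_num) (by norm_num) (1/2) (by norm_num)
    rw [min_eq_left (by norm_num), max_eq_right (by norm_num)] at hx
    rcases hmem with h | h
    · rw [← h] at hx; norm_num at hx
    · simp only [Set.mem_singleton_iff] at h
      have : x = 1/2 := by linarith [h]
      rw [this] at hx; norm_num at hx
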